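/- arXiv:1302.0298 — 5 statements merged into one kernel-verified Lean document; each statement's English description precedes it below -/
import Mathlib

section
/- For every prime number p > 5 there exist a positive integer e and natural numbers i, j with i < p^e − 1 and j < p^e − 1 such that, setting a₁ = ⌈(p^e−1)·(2/5)⌉, a₂ = ⌈(p^e−1)·(2/3)⌉, a₃ = ⌈(p^e−1)·(5/6)⌉, the coefficient of x^i y^j in the polynomial x^{a₁} · y^{a₂} · (x+y)^{a₃} of 𝔽_p[x,y] is nonzero. -/
open MvPolynomial


private lemma fin2_single_eq {a k i j : ℕ}
    (h : Finsupp.single (0 : Fin 2) a + Finsupp.single 1 k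
       = Finsupp.single 0 i + Finsupp.single 1 j) : a = i ∧ k = j := by
  constructor
  · have h0 := DFunLike.congr_fun h 0
    simpa [Finsupp.single_apply] using h0
  · have h1 := DFunLike.congr_fun h 1
    simpa [Finsupp.single_apply] using h1

private lemma coeff_term {R : Type*} [CommSemiring R] (a b k l i j : ℕ) (r : R) :
    MvPolynomial.coeff (Finsupp.single 0 i + Finsupp.single 1 j)
      ((X 0 : MvPolynomial (Fin 2) R) ^ a * X 1 ^ b * (X 0 ^ k * X 1 ^ l * C r))
      = if a + k = i ∧ b + l = j then r else 0 := by
  have key : (X 0 : MvPolynomial (Fin 2) R) ^ a * X 1 ^ b * (X 0 ^ k * X 1 ^ l * C r)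
      = monomial (Finsupp.single 0 (a + k) + Finsupp.single 1 (b + l)) r := by
    simp only [X_pow_eq_monomial, C_apply, monomial_mul, one_mul, mul_one]
    congr 1
    rw [Finsupp.single_add, Finsupp.single_add]
    abel_nf
  rw [key, coeff_monomial]
  by_cases h : a + k = i ∧ b + l = j
  · rw [if_pos, if_pos h]
    rw [h.1, h.2]
  · rw [if_neg, if_neg h]
    intro he
    exact h (fin2_single_eq he)

private lemma coeff_key {R : Type*} [CommSemiring R] (a b c i j : ℕ)
    (h1 : a ≤ i) (h2 : i ≤ a + c) (h3 : i + j = a + b + c) :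
    MvPolynomial.coeff (Finsupp.single 0 i + Finsupp.single 1 j)
      ((X 0 : MvPolynomial (Fin 2) R) ^ a * X 1 ^ b * (X 0 + X 1) ^ c)
      = (c.choose (i - a) : R) := by
  rw [add_pow, Finset.mul_sum, MvPolynomial.coeff_sum]
  have hterm : ∀ k ∈ Finset.range (c + 1),
      MvPolynomial.coeff (Finsupp.single 0 i + Finsupp.single 1 j)
        ((X 0 : MvPolynomial (Fin 2) R) ^ a * X 1 ^ b
          * (X 0 ^ k * X 1 ^ (c - k) * (c.choose k : MvPolynomial (Fin 2) R)))
      = if a + k = i ∧ b + (c - k) = j then (c.choose k : R) else 0 := by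
    intro k _
    rw [← map_natCast (C : R →+* MvPolynomial (Fin 2) R), coeff_term]
  rw [Finset.sum_congr rfl hterm,
    Finset.sum_eq_single_of_mem (i - a) (Finset.mem_range.mpr (by omega))
      (fun k hk hne => if_neg (fun h => hne (by omega))),
    if_pos ⟨by omega, by omega⟩]


private lemma not_dvd_choose {p n k : ℕ} (hp : p.Prime) (hn : n < p) (hk : k ≤ n) :
    ¬ p ∣ n.choose k := by
  intro h
  have hd : p ∣ n.factorial := by
    rw [← Nat.choose_mul_factorial_mul_factorial hk]
    exact Dvd.dvd.mul_right (Dvd.dvd.mul_right h _) _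
  exact absurd ((Nat.Prime.dvd_factorial hp).mp hd) (by omega)

private lemma not_dvd_choose_two_digits {p c k : ℕ} (hp : p.Prime)
    (h1 : k % p ≤ c % p) (h2 : k / p ≤ c / p) (h3 : c / p < p) :
    ¬ p ∣ Nat.choose c k := by
  haveI : Fact p.Prime := ⟨hp⟩
  intro hd
  have hL := Choose.choose_modEq_choose_mod_mul_choose_div_nat (n := c) (k := k) (p := p)
  have hm : Nat.choose c k % p = 0 := by omega
  have hL' : Nat.choose c k % p
      = Nat.choose (c % p) (k % p) * Nat.choose (c / p) (k / p) % p := hL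
  have hprod : p ∣ Nat.choose (c % p) (k % p) * Nat.choose (c / p) (k / p) :=
    Nat.dvd_of_mod_eq_zero (by omega)
  rcases (Nat.Prime.dvd_mul hp).mp hprod with h | h
  · exact not_dvd_choose hp (Nat.mod_lt _ hp.pos) h1 h
  · exact not_dvd_choose hp h3 h2 h

private lemma cast_choose_ne_zero {p c k : ℕ} (_hp : p.Prime) (h : ¬ p ∣ c.choose k) :
    ((c.choose k : ZMod p)) ≠ 0 := by
  haveI : NeZero p := ⟨_hp.pos.ne'⟩
  rw [Ne, ZMod.natCast_eq_zero_iff]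
  exact h

private lemma small_case (p e A B C i j : ℕ) (hp : p.Prime)
    (hA : ⌈((p ^ e : ℚ) - 1) * (2 / 5)⌉₊ = A)
    (hB : ⌈((p ^ e : ℚ) - 1) * (2 / 3)⌉₊ = B)
    (hC : ⌈((p ^ e : ℚ) - 1) * (5 / 6)⌉₊ = C)
    (he : 0 < e) (hi : i < p ^ e - 1) (hj : j < p ^ e - 1)
    (h1 : A ≤ i) (h2 : i ≤ A + C) (h3 : i + j = A + B + C)
    (hnd : ¬ p ∣ C.choose (i - A)) :
    ∃ e : ℕ, 0 < e ∧ ∃ i j : ℕ, i < p ^ e - 1 ∧ j < p ^ e - 1 ∧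
      MvPolynomial.coeff (Finsupp.single 0 i + Finsupp.single 1 j)
        ((X 0 : MvPolynomial (Fin 2) (ZMod p)) ^ ⌈((p ^ e : ℚ) - 1) * (2 / 5)⌉₊ *
          X 1 ^ ⌈((p ^ e : ℚ) - 1) * (2 / 3)⌉₊ *
          (X 0 + X 1) ^ ⌈((p ^ e : ℚ) - 1) * (5 / 6)⌉₊) ≠ 0 := by
  refine ⟨e, he, i, j, hi, hj, ?_⟩
  rw [hA, hB, hC, coeff_key A B C i j h1 h2 h3]
  exact cast_choose_ne_zero hp hnd

set_option maxHeartbeats 1000000 in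
/-- Proposition 3.8, Case 1: Fedder's criterion for `(ℙ¹, (2/5)P₁+(2/3)P₂+(5/6)P₃)`
in characteristic `p > 5`. -/
theorem stmt_4 (p : ℕ) (hp : p.Prime) (h5 : 5 < p) :
    ∃ e : ℕ, 0 < e ∧ ∃ i j : ℕ, i < p ^ e - 1 ∧ j < p ^ e - 1 ∧
      MvPolynomial.coeff (Finsupp.single 0 i + Finsupp.single 1 j)
        ((X 0 : MvPolynomial (Fin 2) (ZMod p)) ^ ⌈((p ^ e : ℚ) - 1) * (2 / 5)⌉₊ *
          X 1 ^ ⌈((p ^ e : ℚ) - 1) * (2 / 3)⌉₊ *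
          (X 0 + X 1) ^ ⌈((p ^ e : ℚ) - 1) * (5 / 6)⌉₊) ≠ 0 := by
  by_cases hbig : 53 ≤ p
  · -- general branch, e = 1
    have hP : (53 : ℚ) ≤ (p : ℚ) := by exact_mod_cast hbig
    set r₁ : ℚ := ((p ^ 1 : ℚ) - 1) * (2 / 5) with hr₁
    set r₂ : ℚ := ((p ^ 1 : ℚ) - 1) * (2 / 3) with hr₂
    set r₃ : ℚ := ((p ^ 1 : ℚ) - 1) * (5 / 6) with hr₃
    have hps : ((p ^ 1 : ℕ) : ℚ) = (p ^ 1 : ℚ) := by push_cast; ring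
    set A := ⌈r₁⌉₊ with hAdef
    set B := ⌈r₂⌉₊ with hBdef
    set C := ⌈r₃⌉₊ with hCdef
    have hA1 : r₁ ≤ A := Nat.le_ceil _
    have hA2 : (A : ℚ) < r₁ + 1 := Nat.ceil_lt_add_one (by rw [hr₁]; linarith)
    have hB1 : r₂ ≤ B := Nat.le_ceil _
    have hB2 : (B : ℚ) < r₂ + 1 := Nat.ceil_lt_add_one (by rw [hr₂]; linarith)
    have hC1 : r₃ ≤ C := Nat.le_ceil _
    have hC2 : (C : ℚ) < r₃ + 1 := Nat.ceil_lt_add_one (by rw [hr₃]; linarith)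
    -- numeric facts
    have hClt : C < p := by
      have : (C : ℚ) < (p : ℚ) := by rw [hr₃] at hC2; linarith
      exact_mod_cast this
    have hBle : B + 2 ≤ p := by
      have : (B : ℚ) + 2 ≤ (p : ℚ) := by rw [hr₂] at hB2; linarith
      exact_mod_cast this
    have hBC : p ≤ B + C + 2 := by
      have : (p : ℚ) ≤ (B : ℚ) + (C : ℚ) + 2 := by
        rw [hr₂] at hB1; rw [hr₃] at hC1; linarith
      exact_mod_cast this
    have hT : A + B + C + 4 ≤ 2 * p := by
      have : (A : ℚ) + B + C + 4 ≤ 2 * (p : ℚ) := by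
        rw [hr₁] at hA2; rw [hr₂] at hB2; rw [hr₃] at hC2
        linarith
      exact_mod_cast this
    have hpow : p ^ 1 = p := pow_one p
    refine ⟨1, one_pos, A + B + C - (p - 2), p - 2, by omega, by omega, ?_⟩
    rw [coeff_key A B C _ _ (by omega) (by omega) (by omega)]
    exact cast_choose_ne_zero hp (not_dvd_choose hp hClt (by omega))
  · have h6 : 6 ≤ p := by omega
    have h52 : p ≤ 52 := by omega
    interval_cases p
    all_goals try (exfalso; revert hp; norm_num; done)
    · exact small_case 7 2 20 32 40 45 47 hp
        (by rw [Nat.ceil_eq_iff (by norm_num)]; norm_num)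
        (by rw [Nat.ceil_eq_iff (by norm_num)]; norm_num)
        (by rw [Nat.ceil_eq_iff (by norm_num)]; norm_num)
        (by norm_num) (by norm_num) (by norm_num) (by norm_num) (by norm_num)
        (by norm_num)
        (not_dvd_choose_two_digits hp (by norm_num) (by norm_num) (by norm_num))
    · exact small_case 11 2 48 80 100 114 114 hp
        (by rw [Nat.ceil_eq_iff (by norm_num)]; norm_num)
        (by rw [Nat.ceil_eq_iff (by norm_num)]; norm_num)
        (by rw [Nat.ceil_eq_iff (by norm_num)]; norm_num)
        (by norm_num) (by norm_num) (by norm_num) (by norm_num) (by norm_num)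
        (by norm_num)
        (not_dvd_choose_two_digits hp (by norm_num) (by norm_num) (by norm_num))
    · exact small_case 13 2 68 112 140 159 161 hp
        (by rw [Nat.ceil_eq_iff (by norm_num)]; norm_num)
        (by rw [Nat.ceil_eq_iff (by norm_num)]; norm_num)
        (by rw [Nat.ceil_eq_iff (by norm_num)]; norm_num)
        (by norm_num) (by norm_num) (by norm_num) (by norm_num) (by norm_num)
        (by norm_num)
        (not_dvd_choose_two_digits hp (by norm_num) (by norm_num) (by norm_num))
    · exact small_case 17 2 116 192 240 286 262 hp
        (by rw [Nat.ceil_eq_iff (by norm_num)]; norm_num)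
        (by rw [Nat.ceil_eq_iff (by norm_num)]; norm_num)
        (by rw [Nat.ceil_eq_iff (by norm_num)]; norm_num)
        (by norm_num) (by norm_num) (by norm_num) (by norm_num) (by norm_num)
        (by norm_num)
        (not_dvd_choose_two_digits hp (by norm_num) (by norm_num) (by norm_num))
    · exact small_case 19 2 144 240 300 353 331 hp
        (by rw [Nat.ceil_eq_iff (by norm_num)]; norm_num)
        (by rw [Nat.ceil_eq_iff (by norm_num)]; norm_num)
        (by rw [Nat.ceil_eq_iff (by norm_num)]; norm_num)
        (by norm_num) (by norm_num) (by norm_num) (by norm_num) (by norm_num)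
        (by norm_num)
        (not_dvd_choose_two_digits hp (by norm_num) (by norm_num) (by norm_num))
    · exact small_case 23 2 212 352 440 511 493 hp
        (by rw [Nat.ceil_eq_iff (by norm_num)]; norm_num)
        (by rw [Nat.ceil_eq_iff (by norm_num)]; norm_num)
        (by rw [Nat.ceil_eq_iff (by norm_num)]; norm_num)
        (by norm_num) (by norm_num) (by norm_num) (by norm_num) (by norm_num)
        (by norm_num)
        (not_dvd_choose_two_digits hp (by norm_num) (by norm_num) (by norm_num))
    · exact small_case 29 2 336 560 700 771 825 hp
        (by rw [Nat.ceil_eq_iff (by norm_num)]; norm_num)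
        (by rw [Nat.ceil_eq_iff (by norm_num)]; norm_num)
        (by rw [Nat.ceil_eq_iff (by norm_num)]; norm_num)
        (by norm_num) (by norm_num) (by norm_num) (by norm_num) (by norm_num)
        (by norm_num)
        (not_dvd_choose_two_digits hp (by norm_num) (by norm_num) (by norm_num))
    · exact small_case 31 1 12 20 25 28 29 hp
        (by rw [Nat.ceil_eq_iff (by norm_num)]; norm_num)
        (by rw [Nat.ceil_eq_iff (by norm_num)]; norm_num)
        (by rw [Nat.ceil_eq_iff (by norm_num)]; norm_num)
        (by norm_num) (by norm_num) (by norm_num) (by norm_num) (by norm_num)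
        (by norm_num)
        (not_dvd_choose_two_digits hp (by norm_num) (by norm_num) (by norm_num))
    · exact small_case 37 1 15 24 30 34 35 hp
        (by rw [Nat.ceil_eq_iff (by norm_num)]; norm_num)
        (by rw [Nat.ceil_eq_iff (by norm_num)]; norm_num)
        (by rw [Nat.ceil_eq_iff (by norm_num)]; norm_num)
        (by norm_num) (by norm_num) (by norm_num) (by norm_num) (by norm_num)
        (by norm_num)
        (not_dvd_choose_two_digits hp (by norm_num) (by norm_num) (by norm_num))
    · exact small_case 41 1 16 27 34 38 39 hp
        (by rw [Nat.ceil_eq_iff (by norm_num)]; norm_num)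
        (by rw [Nat.ceil_eq_iff (by norm_num)]; norm_num)
        (by rw [Nat.ceil_eq_iff (by norm_num)]; norm_num)
        (by norm_num) (by norm_num) (by norm_num) (by norm_num) (by norm_num)
        (by norm_num)
        (not_dvd_choose_two_digits hp (by norm_num) (by norm_num) (by norm_num))
    · exact small_case 43 1 17 28 35 39 41 hp
        (by rw [Nat.ceil_eq_iff (by norm_num)]; norm_num)
        (by rw [Nat.ceil_eq_iff (by norm_num)]; norm_num)
        (by rw [Nat.ceil_eq_iff (by norm_num)]; norm_num)
        (by norm_num) (by norm_num) (by norm_num) (by norm_num) (by norm_num)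
        (by norm_num)
        (not_dvd_choose_two_digits hp (by norm_num) (by norm_num) (by norm_num))
    · exact small_case 47 1 19 31 39 44 45 hp
        (by rw [Nat.ceil_eq_iff (by norm_num)]; norm_num)
        (by rw [Nat.ceil_eq_iff (by norm_num)]; norm_num)
        (by rw [Nat.ceil_eq_iff (by norm_num)]; norm_num)
        (by norm_num) (by norm_num) (by norm_num) (by norm_num) (by norm_num)
        (by norm_num)
        (not_dvd_choose_two_digits hp (by norm_num) (by norm_num) (by norm_num))
end

section
/- For every prime number p > 5 there exist a positive integer e and natural numbers i, j with i < p^e − 1 and j < p^e − 1 such that, setting a₁ = ⌈(p^e−1)·(1/3)⌉ and a₂ = a₃ = ⌈(p^e−1)·(3/4)⌉, the coefficient of x^i y^j in the polynomial x^{a₁} · y^{a₂} · (x+y)^{a₃} of 𝔽_p[x,y] is nonzero. -/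
open MvPolynomial

lemma aux_coeff_add_pow (R : Type*) [CommSemiring R] (c k : ℕ) (hk : k ≤ c) :
    MvPolynomial.coeff (Finsupp.single 0 k + Finsupp.single 1 (c - k))
      ((X 0 + X 1 : MvPolynomial (Fin 2) R) ^ c) = c.choose k := by
  rw [add_pow, coeff_sum]
  have hterm : ∀ r : ℕ, (X (0 : Fin 2) : MvPolynomial (Fin 2) R) ^ r * X 1 ^ (c - r) *
      (c.choose r : MvPolynomial (Fin 2) R)
      = monomial (Finsupp.single 0 r + Finsupp.single 1 (c - r)) ((c.choose r : R)) := by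
    intro r
    rw [← C_eq_coe_nat, C_apply, X_pow_eq_monomial, X_pow_eq_monomial, monomial_mul,
      monomial_mul, mul_one, one_mul, add_zero]
  simp only [hterm, coeff_monomial]
  rw [Finset.sum_eq_single k]
  · simp
  · intro r hr hrk
    rw [if_neg]
    intro h
    apply hrk
    have := DFunLike.congr_fun h 0
    simpa [Finsupp.single_apply, Fin.ext_iff] using this
  · intro h
    exact absurd (Finset.mem_range.mpr (Nat.lt_succ_of_le hk)) h

/-- Proposition 3.8, Case 2: Fedder's criterion for `(ℙ¹, (1/3)P₁+(3/4)P₂+(3/4)P₃)`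
in characteristic `p > 5`. -/
theorem stmt_5 (p : ℕ) (hp : p.Prime) (h5 : 5 < p) :
    ∃ e : ℕ, 0 < e ∧ ∃ i j : ℕ, i < p ^ e - 1 ∧ j < p ^ e - 1 ∧
      MvPolynomial.coeff (Finsupp.single 0 i + Finsupp.single 1 j)
        ((X 0 : MvPolynomial (Fin 2) (ZMod p)) ^ ⌈((p ^ e : ℚ) - 1) * (1 / 3)⌉₊ *
          X 1 ^ ⌈((p ^ e : ℚ) - 1) * (3 / 4)⌉₊ *
          (X 0 + X 1) ^ ⌈((p ^ e : ℚ) - 1) * (3 / 4)⌉₊) ≠ 0 := by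
  haveI : Fact p.Prime := ⟨hp⟩
  have hp0 : 0 < p := hp.pos
  -- p is odd
  have hodd : p % 2 = 1 := Nat.odd_iff.mp (hp.odd_of_ne_two (by omega))
  obtain ⟨m, hm⟩ : ∃ m, p = 2 * m + 1 := ⟨p / 2, by omega⟩
  have hm3 : 3 ≤ m := by omega
  -- 3 does not divide p
  have h3 : ¬ 3 ∣ p := by
    intro h
    have := (Nat.prime_dvd_prime_iff_eq Nat.prime_three hp).mp h
    omega
  have h3' : p % 3 ≠ 0 := fun h => h3 (Nat.dvd_of_mod_eq_zero h)
  -- p^2 ≡ 1 mod 12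
  have h12 : p ^ 2 % 12 = 1 := by
    have hr : p % 12 = 1 ∨ p % 12 = 5 ∨ p % 12 = 7 ∨ p % 12 = 11 := by omega
    rw [Nat.pow_mod]
    rcases hr with h | h | h | h <;> rw [h]
  obtain ⟨n, hn⟩ : ∃ n, p ^ 2 = 12 * n + 1 := ⟨p ^ 2 / 12, by omega⟩
  have hpm : p ^ 2 = 4 * (m * m) + 4 * m + 1 := by rw [hm]; ring
  have hq : 3 * n = m * m + m := by omega
  have hmm : 3 * m ≤ m * m := Nat.mul_le_mul_right m hm3
  set k : ℕ := p * (m + 1) with hkdef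
  have hk : k = 2 * (m * m) + 3 * m + 1 := by rw [hkdef, hm]; ring
  have hk9 : k ≤ 9 * n := by omega
  have hk8 : k < 8 * n := by omega
  have hk6 : 6 * n < k := by omega
  refine ⟨2, by norm_num, 4 * n + k, 18 * n - k, by omega, by omega, ?_⟩
  -- compute the ceilings
  have hcast : (p : ℚ) ^ 2 = 12 * (n : ℚ) + 1 := by exact_mod_cast hn
  have ha1 : ⌈((p ^ 2 : ℚ) - 1) * (1 / 3)⌉₊ = 4 * n := by
    have : ((p ^ 2 : ℚ) - 1) * (1 / 3) = ((4 * n : ℕ) : ℚ) := by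
      push_cast
      rw [hcast]; ring
    rw [this, Nat.ceil_natCast]
  have ha2 : ⌈((p ^ 2 : ℚ) - 1) * (3 / 4)⌉₊ = 9 * n := by
    have : ((p ^ 2 : ℚ) - 1) * (3 / 4) = ((9 * n : ℕ) : ℚ) := by
      push_cast
      rw [hcast]; ring
    rw [this, Nat.ceil_natCast]
  rw [show ((p:ℚ)^2 : ℚ) = ((p^2 : ℕ) : ℚ) from by push_cast; ring] at *
  rw [ha1, ha2]
  -- split the exponent finsupp
  have hsplit : (Finsupp.single (0 : Fin 2) (4 * n + k) + Finsupp.single 1 (18 * n - k))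
      = (Finsupp.single 0 (4 * n) + Finsupp.single 1 (9 * n))
        + (Finsupp.single 0 k + Finsupp.single 1 (9 * n - k)) := by
    have h1 : 18 * n - k = 9 * n + (9 * n - k) := by omega
    rw [h1, Finsupp.single_add, Finsupp.single_add]
    abel
  rw [hsplit]
  rw [show (X (0 : Fin 2) : MvPolynomial (Fin 2) (ZMod p)) ^ (4 * n) * X 1 ^ (9 * n)
      = monomial (Finsupp.single 0 (4 * n) + Finsupp.single 1 (9 * n)) (1 : ZMod p) from by
    rw [X_pow_eq_monomial, X_pow_eq_monomial, monomial_mul, mul_one]]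
  rw [coeff_monomial_mul, one_mul]
  rw [show 9 * n - k = 9 * n - k from rfl]
  rw [aux_coeff_add_pow (ZMod p) (9 * n) k hk9]
  -- now show (choose (9n) k : ZMod p) ≠ 0 via Lucas
  have hkmod : k % p = 0 := by rw [hkdef]; exact Nat.mul_mod_right p (m + 1)
  have hkdiv : k / p = m + 1 := by rw [hkdef]; exact Nat.mul_div_cancel_left _ hp0
  have hlucas : Nat.choose (9 * n) k ≡
      Nat.choose (9 * n % p) (k % p) * Nat.choose (9 * n / p) (k / p) [MOD p] :=
    Choose.choose_modEq_choose_mod_mul_choose_div_nat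
  rw [hkmod, hkdiv, Nat.choose_zero_right, one_mul] at hlucas
  set d := 9 * n / p with hd
  have hdlt : d < p := by
    rw [hd]
    apply Nat.div_lt_of_lt_mul
    calc 9 * n < 12 * n + 1 := by omega
    _ = p * p := by rw [← hn]; ring
  have hmd : m + 1 ≤ d := by
    rw [hd, Nat.le_div_iff_mul_le hp0]
    calc (m + 1) * p = k := by rw [hkdef]; ring
    _ ≤ 9 * n := hk9
  have hnd : ¬ p ∣ Nat.choose d (m + 1) := by
    intro hdvd
    have hfac : Nat.choose d (m + 1) * Nat.factorial (m + 1) * Nat.factorial (d - (m + 1))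
        = Nat.factorial d :=
      Nat.choose_mul_factorial_mul_factorial hmd
    have : p ∣ Nat.factorial d := hfac ▸ ((hdvd.mul_right _).mul_right _)
    have := (Nat.Prime.dvd_factorial hp).mp this
    omega
  have heq : ((Nat.choose (9 * n) k : ZMod p)) = ((Nat.choose d (m + 1) : ZMod p)) :=
    (ZMod.natCast_eq_natCast_iff _ _ _).mpr hlucas
  rw [heq]
  intro h0
  exact hnd ((ZMod.natCast_eq_zero_iff _ _).mp h0)
end

section
/- For every prime number p with p = 31 or p ≥ 35 there exist natural numbers i, j with i < p − 1 and j < p − 1 such that, setting a₁ = ⌈(p−1)·(2/5)⌉, a₂ = ⌈(p−1)·(2/3)⌉, a₃ = ⌈(p−1)·(5/6)⌉, the coefficient of x^i y^j in the polynomial x^{a₁} · y^{a₂} · (x+y)^{a₃} of 𝔽_p[x,y] is nonzero. -/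
open MvPolynomial

lemma ceil_frac (m a b q : ℕ) (hb : 0 < b) (h1 : m * a ≤ q * b) (h2 : q * b < m * a + b) :
    ⌈(m : ℚ) * ((a : ℚ) / (b : ℚ))⌉₊ = q := by
  have hbq : (0 : ℚ) < b := by exact_mod_cast hb
  apply le_antisymm
  · rw [Nat.ceil_le, mul_div_assoc', div_le_iff₀ hbq]
    exact_mod_cast h1
  · rcases Nat.eq_zero_or_pos q with rfl | hq
    · exact Nat.zero_le _
    · have hlt : q - 1 < ⌈(m : ℚ) * ((a : ℚ) / (b : ℚ))⌉₊ := by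
        rw [Nat.lt_ceil, mul_div_assoc', lt_div_iff₀ hbq]
        have hnat : (q - 1) * b < m * a := by
          have hqb : (q - 1) * b + b = q * b := by
            have hq1 : q - 1 + 1 = q := by omega
            calc (q - 1) * b + b = (q - 1 + 1) * b := by ring
              _ = q * b := by rw [hq1]
          omega
        exact_mod_cast hnat
      omega

lemma single_inj_aux (i k c : ℕ)
    (h : (Finsupp.single (0 : Fin 2) i + Finsupp.single 1 (c - i)) =
      (Finsupp.single (0 : Fin 2) k + Finsupp.single 1 (c - k))) : i = k := by
  have := congrArg (fun f => f 0) h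
  simpa [Finsupp.single_apply] using this

lemma coeff_helper {R : Type*} [CommRing R] (a b c k : ℕ) (hk : k ≤ c) :
    MvPolynomial.coeff
      (Finsupp.single 0 (a + k) + Finsupp.single 1 (b + (c - k)))
      ((X 0 : MvPolynomial (Fin 2) R) ^ a * X 1 ^ b * (X 0 + X 1) ^ c)
      = (c.choose k : R) := by
  have hexp : (Finsupp.single (0 : Fin 2) (a + k) + Finsupp.single 1 (b + (c - k)))
      = (Finsupp.single (0 : Fin 2) a + Finsupp.single 1 b)
        + (Finsupp.single (0 : Fin 2) k + Finsupp.single 1 (c - k)) := by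
    rw [Finsupp.single_add, Finsupp.single_add]; abel
  have hmon : (X 0 : MvPolynomial (Fin 2) R) ^ a * X 1 ^ b
      = monomial (Finsupp.single (0 : Fin 2) a + Finsupp.single 1 b) (1 : R) := by
    rw [X_pow_eq_monomial, X_pow_eq_monomial, monomial_mul, one_mul]
  rw [hexp, hmon, coeff_monomial_mul, one_mul, add_pow, MvPolynomial.coeff_sum]
  have hterm : ∀ i ∈ Finset.range (c + 1),
      MvPolynomial.coeff (Finsupp.single (0 : Fin 2) k + Finsupp.single 1 (c - k))
        ((X 0 : MvPolynomial (Fin 2) R) ^ i * X 1 ^ (c - i) *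
          (c.choose i : MvPolynomial (Fin 2) R))
      = if i = k then (c.choose k : R) else 0 := by
    intro i _
    have hmono : (X 0 : MvPolynomial (Fin 2) R) ^ i * X 1 ^ (c - i) *
        (c.choose i : MvPolynomial (Fin 2) R)
        = monomial (Finsupp.single (0 : Fin 2) i + Finsupp.single 1 (c - i))
            ((c.choose i : R)) := by
      rw [X_pow_eq_monomial, X_pow_eq_monomial, monomial_mul, one_mul,
        ← C_eq_coe_nat, mul_comm, C_mul_monomial, mul_one]
    rw [hmono, MvPolynomial.coeff_monomial]
    by_cases hik : i = k
    · subst hik; simp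
    · rw [if_neg (fun h => hik (single_inj_aux i k c h)), if_neg hik]
  rw [Finset.sum_congr rfl hterm]
  simp [Finset.sum_ite_eq', Nat.lt_succ_iff, hk]

/-- The `e = 1` case of Case 1 of Proposition 3.8. -/
theorem stmt_9 (p : ℕ) (hp : p.Prime) (hp' : p = 31 ∨ 35 ≤ p) :
    ∃ i j : ℕ, i < p - 1 ∧ j < p - 1 ∧
      MvPolynomial.coeff (Finsupp.single 0 i + Finsupp.single 1 j)
        ((X 0 : MvPolynomial (Fin 2) (ZMod p)) ^ ⌈((p : ℚ) - 1) * (2 / 5)⌉₊ *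
          X 1 ^ ⌈((p : ℚ) - 1) * (2 / 3)⌉₊ *
          (X 0 + X 1) ^ ⌈((p : ℚ) - 1) * (5 / 6)⌉₊) ≠ 0 := by
  have hp1 : 1 ≤ p := hp.one_lt.le
  have hcast : ((p : ℚ) - 1) = ((p - 1 : ℕ) : ℚ) := by
    push_cast [hp1]; ring
  have e1 : ⌈((p : ℚ) - 1) * (2 / 5)⌉₊ = ((p - 1) * 2 + 4) / 5 := by
    rw [hcast]
    simpa using ceil_frac (p - 1) 2 5 (((p - 1) * 2 + 4) / 5) (by norm_num) (by omega) (by omega)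
  have e2 : ⌈((p : ℚ) - 1) * (2 / 3)⌉₊ = ((p - 1) * 2 + 2) / 3 := by
    rw [hcast]
    simpa using ceil_frac (p - 1) 2 3 (((p - 1) * 2 + 2) / 3) (by norm_num) (by omega) (by omega)
  have e3 : ⌈((p : ℚ) - 1) * (5 / 6)⌉₊ = ((p - 1) * 5 + 5) / 6 := by
    rw [hcast]
    simpa using ceil_frac (p - 1) 5 6 (((p - 1) * 5 + 5) / 6) (by norm_num) (by omega) (by omega)
  set a1 := ((p - 1) * 2 + 4) / 5 with ha1
  set a2 := ((p - 1) * 2 + 2) / 3 with ha2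
  set a3 := ((p - 1) * 5 + 5) / 6 with ha3
  have h2 : ¬ (2 ∣ p) := fun h => by
    rcases (hp.eq_one_or_self_of_dvd 2 h) with h' | h' <;> omega
  have h3 : ¬ (3 ∣ p) := fun h => by
    rcases (hp.eq_one_or_self_of_dvd 3 h) with h' | h' <;> omega
  have h5 : ¬ (5 ∣ p) := fun h => by
    rcases (hp.eq_one_or_self_of_dvd 5 h) with h' | h' <;> omega
  have ha1le : a1 ≤ p - 2 := by omega
  set k := p - 2 - a1 with hk
  have hkle : k ≤ a3 := by omega
  have hsum : a2 + (a3 - k) ≤ p - 2 := by omega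
  have ha3lt : a3 < p := by omega
  refine ⟨a1 + k, a2 + (a3 - k), by omega, by omega, ?_⟩
  rw [e1, e2, e3, coeff_helper a1 a2 a3 k hkle]
  intro h0
  rw [ZMod.natCast_eq_zero_iff] at h0
  have hdvd : a3.choose k ∣ a3.factorial :=
    ⟨k.factorial * (a3 - k).factorial, by
      rw [← Nat.choose_mul_factorial_mul_factorial hkle]; ring⟩
  have := (hp.dvd_factorial).mp (h0.trans hdvd)
  omega
end

section
/- In the polynomial ring 𝔽₁₇[x,y], the coefficient of the monomial x^287 y^261 in the polynomial x^116 · y^192 · (x+y)^240 is nonzero; moreover 287 < 17² − 1 and 261 < 17² − 1. -/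
open MvPolynomial

lemma choose_240_171_zmod17 : ((Nat.choose 240 171 : ℕ) : ZMod 17) ≠ 0 := by
  haveI : Fact (Nat.Prime 17) := ⟨by norm_num⟩
  have h := Choose.choose_modEq_choose_mod_mul_choose_div
    (n := 240) (k := 171) (p := 17)
  have h2 : ((Nat.choose 240 171 : ℕ) : ZMod 17)
      = ((Nat.choose (240 % 17) (171 % 17) * Nat.choose (240 / 17) (171 / 17) : ℕ) : ZMod 17) := by
    have := (ZMod.intCast_eq_intCast_iff' _ _ _).mpr h
    push_cast at this ⊢
    exact_mod_cast this
  have h3 : Nat.choose (240 % 17) (171 % 17) * Nat.choose (240 / 17) (171 / 17) = 2002 := by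
    decide
  rw [h2, h3, Ne, ZMod.natCast_eq_zero_iff]
  decide

/-- Verification in Proposition 3.8 for p = 17, e = 2. -/
theorem stmt_14 :
    MvPolynomial.coeff (Finsupp.single 0 287 + Finsupp.single 1 261)
      ((X 0 : MvPolynomial (Fin 2) (ZMod 17)) ^ 116 * X 1 ^ 192 * (X 0 + X 1) ^ 240) ≠ 0 ∧
    (287 : ℕ) < 17 ^ 2 - 1 ∧ (261 : ℕ) < 17 ^ 2 - 1 := by
  refine ⟨?_, by norm_num, by norm_num⟩
  have hexp : ((X 0 : MvPolynomial (Fin 2) (ZMod 17)) ^ 116 * X 1 ^ 192 * (X 0 + X 1) ^ 240)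
      = ∑ k ∈ Finset.range 241,
        monomial ((Finsupp.single 0 116 + Finsupp.single 1 192)
            + (Finsupp.single 0 k + Finsupp.single 1 (240 - k)))
          ((Nat.choose 240 k : ℕ) : ZMod 17) := by
    rw [add_pow, Finset.mul_sum]
    refine Finset.sum_congr rfl fun k hk => ?_
    rw [← C_eq_coe_nat]
    simp only [X_pow_eq_monomial, C_apply, monomial_mul]
    congr 1
    · ext i; simp
    · ring
  rw [hexp, coeff_sum]
  simp only [coeff_monomial]
  rw [Finset.sum_eq_single 171]
  · rw [if_pos]
    · exact choose_240_171_zmod17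
    · ext i
      fin_cases i <;> simp [Finsupp.single_apply]
  · intro k hk hne
    rw [if_neg]
    intro h
    apply hne
    have := DFunLike.congr_fun h (0 : Fin 2)
    simp [Finsupp.single_apply] at this
    omega
  · intro h; exact absurd (by norm_num : (171:ℕ) ∈ Finset.range 241) h
end

section
/- In the polynomial ring 𝔽₂₃[x,y], the coefficient of the monomial x^491 y^513 in the polynomial x^212 · y^352 · (x+y)^440 is nonzero; moreover 491 < 23² − 1 and 513 < 23² − 1. -/
open MvPolynomial Finset

lemma term_coeff (a b : ℕ) (c : ZMod 23) (m : Fin 2 →₀ ℕ) :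
    MvPolynomial.coeff m (X 0 ^ a * X 1 ^ b * C c : MvPolynomial (Fin 2) (ZMod 23)) =
      if Finsupp.single 0 a + Finsupp.single 1 b = m then c else 0 := by
  rw [X_pow_eq_monomial, X_pow_eq_monomial, monomial_mul, mul_one, mul_comm, C_mul_monomial,
    mul_one, coeff_monomial]

lemma key : MvPolynomial.coeff (Finsupp.single 0 491 + Finsupp.single 1 513)
      ((X 0 : MvPolynomial (Fin 2) (ZMod 23)) ^ 212 * X 1 ^ 352 * (X 0 + X 1) ^ 440) =
      (Nat.choose 440 279 : ZMod 23) := by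
  rw [add_pow, Finset.mul_sum, coeff_sum]
  have hterm : ∀ k, ((X 0 : MvPolynomial (Fin 2) (ZMod 23)) ^ 212 * X 1 ^ 352 *
      (X 0 ^ k * X 1 ^ (440 - k) * (Nat.choose 440 k : MvPolynomial (Fin 2) (ZMod 23)))) =
      X 0 ^ (212 + k) * X 1 ^ (352 + (440 - k)) * C ((Nat.choose 440 k : ZMod 23)) := by
    intro k
    rw [pow_add, pow_add, map_natCast (C : ZMod 23 →+* MvPolynomial (Fin 2) (ZMod 23))]
    ring
  rw [Finset.sum_eq_single 279]
  · rw [hterm, term_coeff]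
    rw [if_pos (by norm_num)]
  · intro k hk hne
    rw [hterm, term_coeff, if_neg]
    intro h
    have h0 := DFunLike.congr_fun h (0 : Fin 2)
    simp [Finsupp.single_apply] at h0
    omega
  · intro h
    simp at h

/-- Verification in Proposition 3.8 for p = 23, e = 2. -/
theorem stmt_16 :
    MvPolynomial.coeff (Finsupp.single 0 491 + Finsupp.single 1 513)
      ((X 0 : MvPolynomial (Fin 2) (ZMod 23)) ^ 212 * X 1 ^ 352 * (X 0 + X 1) ^ 440) ≠ 0 ∧
    (491 : ℕ) < 23 ^ 2 - 1 ∧ (513 : ℕ) < 23 ^ 2 - 1 := by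
  refine ⟨?_, by norm_num, by norm_num⟩
  rw [key]
  haveI : Fact (Nat.Prime 23) := ⟨by norm_num⟩
  have h : Nat.choose 440 279 ≡
      Nat.choose (440 % 23) (279 % 23) * Nat.choose (440 / 23) (279 / 23) [MOD 23] :=
    Choose.choose_modEq_choose_mod_mul_choose_div_nat
  have h2 : ((Nat.choose 440 279 : ℕ) : ZMod 23) =
      ((Nat.choose (440 % 23) (279 % 23) * Nat.choose (440 / 23) (279 / 23) : ℕ) : ZMod 23) :=
    (ZMod.natCast_eq_natCast_iff _ _ _).mpr h
  have h3 : Nat.choose (440 % 23) (279 % 23) * Nat.choose (440 / 23) (279 / 23) = 50388 := by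
    norm_num [Nat.choose]
  rw [h2, h3]
  intro hc
  exact absurd ((ZMod.natCast_eq_zero_iff _ _).mp hc) (by norm_num)
end
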